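/- Let (Ω, 𝓕, μ) be a probability space and θ : Ω → Ω an invertible, ergodic, measure-preserving transformation (θ and θ^{−1} measurable, μ ∘ θ^{−1} = μ, and every θ-invariant measurable set has measure 0 or 1). Let d ≥ 1 and let P : Ω → M_d(ℂ) be a measurable map such that for μ-almost every ω, P(ω) is an orthogonal projection matrix (P(ω)ᴴ = P(ω) and P(ω)² = P(ω)). Assume: (i) for μ-almost every ω, if P(ω) ≠ 0 then there exists N(ω) ∈ ℕ with P(θ^n ω) = 1 for all n ≥ N(ω); and (ii) μ{ω : P(ω) ≠ 0} > 0. Then P(ω) = 1 for μ-almost every ω. -/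

import Mathlib

open MeasureTheory Filter Matrix

/-- **Ergodic dichotomy for eventually-absorbed random projections.**
Let `θ` be an invertible, ergodic, measure-preserving transformation of a
probability space, and `P` a measurable family of orthogonal projection
matrices such that a.e. on `{P ≠ 0}` the forward orbit is eventually mapped to
the identity.  If `{P ≠ 0}` has positive measure, then `P = 1` almost
everywhere. -/
theorem stmt7
    {Ω : Type*} [MeasurableSpace Ω] (μ : Measure Ω) [IsProbabilityMeasure μ]
    (θ θinv : Ω → Ω)
    (hθmeas : Measurable θ) (hθinvmeas : Measurable θinv)
    (hinv1 : Function.LeftInverse θinv θ) (hinv2 : Function.RightInverse θinv θ)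
    (hmp : MeasurePreserving θ μ μ)
    (herg : ∀ s : Set Ω, MeasurableSet s → θ ⁻¹' s = s → μ s = 0 ∨ μ s = 1)
    {d : ℕ} (hd : 1 ≤ d)
    (P : Ω → Matrix (Fin d) (Fin d) ℂ)
    (hPmeas : ∀ i j, Measurable fun ω => P ω i j)
    (hproj : ∀ᵐ ω ∂μ, (P ω)ᴴ = P ω ∧ P ω * P ω = P ω)
    (habs : ∀ᵐ ω ∂μ, P ω ≠ 0 → ∃ N : ℕ, ∀ n, N ≤ n → P (θ^[n] ω) = 1)
    (hpos : 0 < μ {ω | P ω ≠ 0}) :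
    ∀ᵐ ω ∂μ, P ω = 1 := by
  -- T : set where P = 1
  set T : Set Ω := {ω | P ω = 1} with hT
  have hTmeas : MeasurableSet T := by
    have : T = ⋂ i, ⋂ j, {ω | P ω i j = (1 : Matrix (Fin d) (Fin d) ℂ) i j} := by
      ext ω
      simp only [Set.mem_iInter, Set.mem_setOf_eq, hT]
      constructor
      · intro h i j; rw [h]
      · intro h; ext i j; exact h i j
    rw [this]
    exact MeasurableSet.iInter fun i => MeasurableSet.iInter fun j =>
      (hPmeas i j) (measurableSet_singleton _)
  -- S : set of eventually absorbed points
  set S : Set Ω := ⋃ N : ℕ, ⋂ n : ℕ, {ω | N ≤ n → θ^[n] ω ∈ T} with hS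
  have hSmeas : MeasurableSet S := by
    refine MeasurableSet.iUnion fun N => MeasurableSet.iInter fun n => ?_
    by_cases h : N ≤ n
    · have : {ω | N ≤ n → θ^[n] ω ∈ T} = θ^[n] ⁻¹' T := by
        ext ω; simp [h]
      rw [this]
      exact (hθmeas.iterate n) hTmeas
    · have : {ω | N ≤ n → θ^[n] ω ∈ T} = Set.univ := by
        ext ω; simp [h]
      rw [this]; exact MeasurableSet.univ
  have hmemS : ∀ ω, ω ∈ S ↔ ∃ N : ℕ, ∀ n, N ≤ n → θ^[n] ω ∈ T := by
    intro ω; simp [hS]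
  -- S is invariant
  have hSinv : θ ⁻¹' S = S := by
    ext ω
    simp only [Set.mem_preimage, hmemS]
    constructor
    · rintro ⟨N, hN⟩
      refine ⟨N + 1, fun n hn => ?_⟩
      obtain ⟨m, rfl⟩ : ∃ m, n = m + 1 := ⟨n - 1, by omega⟩
      have := hN m (by omega)
      rwa [Function.iterate_succ_apply]
    · rintro ⟨N, hN⟩
      refine ⟨N, fun n hn => ?_⟩
      have := hN (n+1) (by omega)
      rwa [Function.iterate_succ_apply] at this
  -- μ S > 0
  have hsub : ∀ᵐ ω ∂μ, ω ∈ {ω | P ω ≠ 0} → ω ∈ S := by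
    filter_upwards [habs] with ω h hω
    obtain ⟨N, hN⟩ := h hω
    exact (hmemS ω).2 ⟨N, fun n hn => hN n hn⟩
  have hposS : 0 < μ S := lt_of_lt_of_le hpos (measure_mono_ae hsub)
  have hS1 : μ S = 1 := (herg S hSmeas hSinv).resolve_left (by exact_mod_cast hposS.ne')
  have hSae : ∀ᵐ ω ∂μ, ω ∈ S := by
    have : μ Sᶜ = 0 := by
      rw [measure_compl hSmeas (measure_ne_top μ S), hS1, measure_univ, tsub_self]
    exact ae_iff.mpr this
  -- Poincaré recurrence on B = Tᶜ
  have hcons : Conservative θ μ := hmp.conservative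
  have hrec := hcons.ae_mem_imp_frequently_image_mem
    (s := Tᶜ) hTmeas.compl.nullMeasurableSet
  filter_upwards [hSae, hrec] with ω hωS hωrec
  by_contra hP1
  have hωB : ω ∈ Tᶜ := hP1
  obtain ⟨N, hN⟩ := (hmemS ω).1 hωS
  have := (hωrec hωB).and_eventually (eventually_ge_atTop N)
  obtain ⟨n, hnB, hnN⟩ := this.exists
  exact hnB (hN n hnN)
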